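/- If pP > 0, then for any fixed plant index n the conditional probability of the system event given that plant n is available satisfies P(S | P_n) = r^API·(1 - (1-pL)^c·Q^{b-1}), where Q = (1-pP)+pP·(1-pL)^c. (Paper equation (A14).) -/

import Mathlib

open MeasureTheory ProbabilityTheory MeasurableSpace

theorem stmt_5
    {Ω : Type*} [MeasurableSpace Ω] (μ : Measure Ω) [IsProbabilityMeasure μ]
    (pA pP pL : ℝ)
    (hpA0 : 0 ≤ pA) (hpA1 : pA ≤ 1) (hpP0 : 0 ≤ pP) (hpP1 : pP ≤ 1)
    (hpL0 : 0 ≤ pL) (hpL1 : pL ≤ 1)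
    (a b c : ℕ) (ha : 0 < a) (hb : 0 < b) (hc : 0 < c)
    (A : Fin a → Set Ω) (P : Fin b → Set Ω) (L : Fin b → Fin c → Set Ω)
    (hmA : ∀ i, MeasurableSet (A i)) (hmP : ∀ j, MeasurableSet (P j))
    (hmL : ∀ j k, MeasurableSet (L j k))
    (hindep : iIndepSet
      (Sum.elim A (Sum.elim P (fun jk : Fin b × Fin c => L jk.1 jk.2))) μ)
    (hPA : ∀ i, (μ (A i)).toReal = pA)
    (hPP : ∀ j, (μ (P j)).toReal = pP)
    (hPL : ∀ j k, (μ (L j k)).toReal = pL)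
    (hpPpos : 0 < pP) (n : Fin b) :
    (μ[|P n] ((⋃ i, A i) ∩ ⋃ j, P j ∩ ⋃ k, L j k)).toReal
        = (1 - (1 - pA) ^ a) *
          (1 - (1 - pL) ^ c * ((1 - pP) + pP * (1 - pL) ^ c) ^ (b - 1)) := by
  -- notation
  set E : (Fin a ⊕ (Fin b ⊕ Fin b × Fin c)) → Set Ω := Sum.elim A (Sum.elim P (fun jk : Fin b × Fin c => L jk.1 jk.2)) with hE
  have hmE : ∀ i, MeasurableSet (E i) := by
    rintro (i | j | ⟨j, k⟩)
    · exact hmA i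
    · exact hmP j
    · exact hmL j k
  have hI : iIndep (fun i => generateFrom {E i}) μ := (iIndepSet_iff_iIndep _ _).1 hindep
  -- real bounds
  have h1L0 : (0:ℝ) ≤ 1 - pL := by linarith
  have hqL0 : (0:ℝ) ≤ (1 - pL) ^ c := pow_nonneg h1L0 c
  have hqL1 : (1 - pL) ^ c ≤ 1 := pow_le_one₀ h1L0 (by linarith)
  set Qr : ℝ := (1 - pP) + pP * (1 - pL) ^ c with hQr
  have hQ0 : 0 ≤ Qr := by nlinarith [mul_nonneg hpP0 hqL0]
  have hQ1 : Qr ≤ 1 := by nlinarith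
  have hQp0 : 0 ≤ Qr ^ (b - 1) := pow_nonneg hQ0 _
  have hQp1 : Qr ^ (b - 1) ≤ 1 := pow_le_one₀ hQ0 hQ1
  have hw0 : 0 ≤ (1 - pL) ^ c * Qr ^ (b - 1) := mul_nonneg hqL0 hQp0
  have hw1 : (1 - pL) ^ c * Qr ^ (b - 1) ≤ 1 := mul_le_one₀ hqL1 hQp0 hQp1
  -- basic measures
  have hA : ∀ i, μ (A i) = ENNReal.ofReal pA := fun i => by
    rw [← hPA i, ENNReal.ofReal_toReal (measure_ne_top μ _)]
  have hP : ∀ j, μ (P j) = ENNReal.ofReal pP := fun j => by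
    rw [← hPP j, ENNReal.ofReal_toReal (measure_ne_top μ _)]
  have hL : ∀ j k, μ (L j k) = ENNReal.ofReal pL := fun j k => by
    rw [← hPL j k, ENNReal.ofReal_toReal (measure_ne_top μ _)]
  have hAc : ∀ i, μ (A i)ᶜ = ENNReal.ofReal (1 - pA) := fun i => by
    rw [prob_compl_eq_one_sub (hmA i), hA i, ← ENNReal.ofReal_one,
      ← ENNReal.ofReal_sub _ hpA0]
  have hLc : ∀ j k, μ (L j k)ᶜ = ENNReal.ofReal (1 - pL) := fun j k => by
    rw [prob_compl_eq_one_sub (hmL j k), hL j k, ← ENNReal.ofReal_one,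
      ← ENNReal.ofReal_sub _ hpL0]
  -- generator membership helper
  have hgen : ∀ (T : Set (Fin a ⊕ (Fin b ⊕ Fin b × Fin c))) (i : Fin a ⊕ (Fin b ⊕ Fin b × Fin c)), i ∈ T →
      MeasurableSet[generateFrom {t | ∃ m ∈ T, E m = t}] (E i) :=
    fun T i hi => measurableSet_generateFrom ⟨i, hi, rfl⟩
  -- Step F/G : μ (P j ∩ ⋂ k, (L j k)ᶜ)
  have hPnL : ∀ j, μ (P j ∩ ⋂ k, (L j k)ᶜ) = ENNReal.ofReal (pP * (1 - pL) ^ c) := by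
    intro j
    classical
    set s : Finset (Fin a ⊕ (Fin b ⊕ Fin b × Fin c)) := insert (Sum.inr (Sum.inl j))
      ((Finset.univ : Finset (Fin c)).map
        ⟨fun k => (Sum.inr (Sum.inr (j, k)) : Fin a ⊕ (Fin b ⊕ Fin b × Fin c)), by
          intro x y hxy; simpa using hxy⟩) with hs
    set f : (Fin a ⊕ (Fin b ⊕ Fin b × Fin c)) → Set Ω := fun i => if i = Sum.inr (Sum.inl j) then P j else (E i)ᶜ with hf
    have hmeas : ∀ i ∈ s, MeasurableSet[generateFrom {E i}] (f i) := by
      intro i _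
      by_cases h : i = Sum.inr (Sum.inl j)
      · subst h; simp only [hf, if_pos rfl]
        exact measurableSet_generateFrom (Set.mem_singleton _)
      · simp only [hf, if_neg h]
        exact (measurableSet_generateFrom (Set.mem_singleton _)).compl
    have hset : (⋂ i ∈ s, f i) = P j ∩ ⋂ k, (L j k)ᶜ := by
      ext ω
      simp only [hs, hf, Set.mem_iInter, Finset.mem_insert, Finset.mem_map,
        Finset.mem_univ, true_and, Set.mem_inter_iff, Set.mem_compl_iff,
        Function.Embedding.coeFn_mk]
      constructor
      · intro h
        refine ⟨by simpa using h _ (Or.inl rfl), ?_⟩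
        intro k
        have := h _ (Or.inr ⟨k, rfl⟩)
        change ω ∈ (if (Sum.inr (Sum.inr (j, k)) : Fin a ⊕ (Fin b ⊕ Fin b × Fin c)) = Sum.inr (Sum.inl j) then P j else (E (Sum.inr (Sum.inr (j, k))))ᶜ) at this
        simpa [hE] using this
      · rintro ⟨h1, h2⟩ i hi
        rcases hi with rfl | ⟨k, rfl⟩
        · simpa using h1
        · show ω ∈ (if (Sum.inr (Sum.inr (j, k)) : Fin a ⊕ (Fin b ⊕ Fin b × Fin c)) = Sum.inr (Sum.inl j) then P j else (E (Sum.inr (Sum.inr (j, k))))ᶜ)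
          simpa [hE] using h2 k
    have hprod := hI.meas_biInter (S := s) (s := f) hmeas
    rw [hset] at hprod
    rw [hprod, hs, Finset.prod_insert (by simp; intro x h; cases h), Finset.prod_map]
    have : ∀ k : Fin c,
        f ((⟨fun k => (Sum.inr (Sum.inr (j, k)) : Fin a ⊕ (Fin b ⊕ Fin b × Fin c)), by intro x y hxy; simpa using hxy⟩ :
          Fin c ↪ (Fin a ⊕ (Fin b ⊕ Fin b × Fin c))) k) = (L j k)ᶜ := by
      intro k; show (if (Sum.inr (Sum.inr (j, k)) : Fin a ⊕ (Fin b ⊕ Fin b × Fin c)) = Sum.inr (Sum.inl j) then P j else (E (Sum.inr (Sum.inr (j, k))))ᶜ) = _; simp [hE]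
    rw [show f (Sum.inr (Sum.inl j)) = P j from if_pos rfl,
      Finset.prod_congr rfl (fun k _ => by rw [this k, hLc j k]),
      Finset.prod_const, Finset.card_univ, Fintype.card_fin, hP j,
      ← ENNReal.ofReal_pow h1L0, ← ENNReal.ofReal_mul hpP0]
  -- μ (P j ∩ ⋃ k, L j k) and complement
  have hX : ∀ j, μ (P j ∩ ⋃ k, L j k) = ENNReal.ofReal (pP - pP * (1 - pL) ^ c) := by
    intro j
    have hsub : P j ∩ ⋂ k, (L j k)ᶜ ⊆ P j := Set.inter_subset_left
    have hseteq : P j ∩ ⋃ k, L j k = P j \ (P j ∩ ⋂ k, (L j k)ᶜ) := by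
      ext ω
      by_cases hω : ω ∈ P j <;>
        simp [hω, not_forall, not_not]
    rw [hseteq, measure_diff hsub ((hmP j).inter (MeasurableSet.iInter
        (fun k => (hmL j k).compl))).nullMeasurableSet (measure_ne_top μ _),
      hPnL j, hP j, ← ENNReal.ofReal_sub _ (mul_nonneg hpP0 hqL0)]
  have hXc : ∀ j, μ (P j ∩ ⋃ k, L j k)ᶜ = ENNReal.ofReal Qr := by
    intro j
    rw [prob_compl_eq_one_sub ((hmP j).inter (MeasurableSet.iUnion (fun k => hmL j k))),
      hX j, ← ENNReal.ofReal_one, ← ENNReal.ofReal_sub _ (by nlinarith)]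
    congr 1
    ring
  -- the per-plant events
  classical
  set Y : Fin b → Set Ω := fun j =>
    if j = n then P n ∩ ⋂ k, (L n k)ᶜ else (P j ∩ ⋃ k, L j k)ᶜ with hY
  have hmY : ∀ j, MeasurableSet (Y j) := by
    intro j
    by_cases h : j = n
    · simp only [hY]
      rw [if_pos h]
      exact (hmP n).inter (MeasurableSet.iInter fun k => (hmL n k).compl)
    · simp only [hY]
      rw [if_neg h]
      exact ((hmP j).inter (MeasurableSet.iUnion fun k => hmL j k)).compl
  -- plant index of a coordinate
  set pl : (Fin a ⊕ (Fin b ⊕ Fin b × Fin c)) → Option (Fin b) :=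
    Sum.elim (fun _ => none) (Sum.elim (fun j => some j) (fun jk => some jk.1)) with hpl
  -- Y j is measurable w.r.t. generators of block j
  have hYgen : ∀ (T : Set (Fin a ⊕ (Fin b ⊕ Fin b × Fin c))) (j : Fin b),
      (Sum.inr (Sum.inl j) : Fin a ⊕ (Fin b ⊕ Fin b × Fin c)) ∈ T → (∀ k, (Sum.inr (Sum.inr (j, k)) : Fin a ⊕ (Fin b ⊕ Fin b × Fin c)) ∈ T) →
      MeasurableSet[generateFrom {t | ∃ m ∈ T, E m = t}] (Y j) := by
    intro T j hjT hkT
    have hPj : MeasurableSet[generateFrom {t | ∃ m ∈ T, E m = t}] (P j) :=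
      hgen T _ hjT
    have hLjk : ∀ k, MeasurableSet[generateFrom {t | ∃ m ∈ T, E m = t}] (L j k) :=
      fun k => hgen T _ (hkT k)
    by_cases h : j = n
    · subst h
      simp only [hY, if_pos rfl]
      exact hPj.inter (MeasurableSet.iInter fun k => (hLjk k).compl)
    · simp only [hY, if_neg h]
      exact (hPj.inter (MeasurableSet.iUnion hLjk)).compl
  -- product formula over plants
  have hprodY : ∀ s : Finset (Fin b), μ (⋂ j ∈ s, Y j) = ∏ j ∈ s, μ (Y j) := by
    intro s
    induction s using Finset.induction_on with
    | empty => simp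
    | @insert j₀ s hj₀ ih =>
      have hdisj : Disjoint (pl ⁻¹' {some j₀}) (pl ⁻¹' (some '' (s : Set (Fin b)))) := by
        rw [Set.disjoint_left]
        rintro x hx1 hx2
        simp only [Set.mem_preimage, Set.mem_singleton_iff] at hx1
        simp only [Set.mem_preimage, Set.mem_image, Finset.mem_coe] at hx2
        obtain ⟨j, hj, hjj⟩ := hx2
        rw [hx1] at hjj
        rw [Option.some_inj.mp hjj] at hj
        exact hj₀ hj
      have hInd := iIndepSet.indep_generateFrom_of_disjoint hmE hindep _ _ hdisj
      have h1 : MeasurableSet[generateFrom {t | ∃ m ∈ pl ⁻¹' {some j₀}, E m = t}] (Y j₀) :=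
        hYgen _ j₀ (by simp [hpl]) (fun k => by simp [hpl])
      have h2 : MeasurableSet[generateFrom
          {t | ∃ m ∈ pl ⁻¹' (some '' (s : Set (Fin b))), E m = t}] (⋂ j ∈ s, Y j) := by
        refine MeasurableSet.biInter (Set.to_countable _) (fun j hj => ?_)
        exact hYgen _ j (by simp only [hpl, Set.mem_preimage, Sum.elim_inr, Sum.elim_inl,
            Set.mem_image, Finset.mem_coe, Option.some.injEq]; exact ⟨j, hj, rfl⟩)
          (fun k => by simp only [hpl, Set.mem_preimage, Sum.elim_inr, Sum.elim_inl,
            Set.mem_image, Finset.mem_coe, Option.some.injEq]; exact ⟨j, hj, rfl⟩)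
      have := (Indep_iff _ _ _).1 hInd _ _ h1 h2
      rw [Finset.set_biInter_insert, this, ih, Finset.prod_insert hj₀]
  -- value of the product
  have hYn : μ (Y n) = ENNReal.ofReal (pP * (1 - pL) ^ c) := by
    simp only [hY, if_pos rfl]; exact hPnL n
  have hYj : ∀ j, j ≠ n → μ (Y j) = ENNReal.ofReal Qr := by
    intro j hj; simp only [hY, if_neg hj]; exact hXc j
  have hprodval : ∏ j : Fin b, μ (Y j)
      = ENNReal.ofReal (pP * (1 - pL) ^ c) * ENNReal.ofReal Qr ^ (b - 1) := by
    rw [← Finset.mul_prod_erase Finset.univ _ (Finset.mem_univ n), hYn]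
    congr 1
    rw [Finset.prod_congr rfl (fun j hj => hYj j (Finset.ne_of_mem_erase hj)),
      Finset.prod_const, Finset.card_erase_of_mem (Finset.mem_univ n),
      Finset.card_univ, Fintype.card_fin]
  -- the key intersection
  have hTset : P n ∩ ⋂ j, (P j ∩ ⋃ k, L j k)ᶜ = ⋂ j, Y j := by
    ext ω
    simp only [Set.mem_inter_iff, Set.mem_iInter, Set.mem_compl_iff]
    constructor
    · rintro ⟨hPn, hnot⟩ j
      by_cases h : j = n
      · simp only [hY]
        rw [if_pos h]
        simp only [Set.mem_inter_iff, Set.mem_iInter, Set.mem_compl_iff]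
        exact ⟨hPn, fun k hk => hnot n ⟨hPn, Set.mem_iUnion.2 ⟨k, hk⟩⟩⟩
      · simp only [hY]
        rw [if_neg h]
        exact hnot j
    · intro hall
      have hn := hall n
      simp only [hY, if_pos rfl, Set.mem_inter_iff, Set.mem_iInter, Set.mem_compl_iff] at hn
      refine ⟨hn.1, fun j => ?_⟩
      by_cases h : j = n
      · subst h
        rintro ⟨-, hU⟩
        obtain ⟨k, hk⟩ := Set.mem_iUnion.1 hU
        exact hn.2 k hk
      · have := hall j
        simpa only [hY, if_neg h, Set.mem_compl_iff, Set.mem_inter_iff] using this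
  have hT : μ (P n ∩ ⋂ j, (P j ∩ ⋃ k, L j k)ᶜ)
      = ENNReal.ofReal (pP * (1 - pL) ^ c * Qr ^ (b - 1)) := by
    rw [hTset]
    have : (⋂ j, Y j) = ⋂ j ∈ (Finset.univ : Finset (Fin b)), Y j := by simp
    rw [this, hprodY, Finset.prod_congr rfl (fun j _ => rfl)]
    rw [hprodval, ← ENNReal.ofReal_pow hQ0, ← ENNReal.ofReal_mul (by positivity)]
  -- μ (P n ∩ ⋃ j X j)
  have hW : μ (P n ∩ ⋃ j, P j ∩ ⋃ k, L j k)
      = ENNReal.ofReal (pP * (1 - (1 - pL) ^ c * Qr ^ (b - 1))) := by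
    have hseteq : P n ∩ ⋃ j, P j ∩ ⋃ k, L j k
        = P n \ (P n ∩ ⋂ j, (P j ∩ ⋃ k, L j k)ᶜ) := by
      ext ω
      by_cases hω : ω ∈ P n <;>
        simp [hω, not_forall, not_not]
    rw [hseteq, measure_diff Set.inter_subset_left
        ((hmP n).inter (MeasurableSet.iInter fun j =>
          ((hmP j).inter (MeasurableSet.iUnion fun k => hmL j k)).compl)).nullMeasurableSet
        (measure_ne_top μ _),
      hT, hP n, ← ENNReal.ofReal_sub _ (by positivity)]
    congr 1
    ring
  -- independence of the API block from the plant block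
  have hUA : μ (⋃ i, A i) = ENNReal.ofReal (1 - (1 - pA) ^ a) := by
    have hcap : μ (⋂ i, (A i)ᶜ) = ENNReal.ofReal ((1 - pA) ^ a) := by
      classical
      set s : Finset (Fin a ⊕ (Fin b ⊕ Fin b × Fin c)) := (Finset.univ : Finset (Fin a)).map
        ⟨fun i => (Sum.inl i : Fin a ⊕ (Fin b ⊕ Fin b × Fin c)), fun x y hxy => by simpa using hxy⟩ with hs
      have hmeas : ∀ i ∈ s, MeasurableSet[generateFrom {E i}] ((E i)ᶜ) :=
        fun i _ => (measurableSet_generateFrom (Set.mem_singleton _)).compl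
      have hprod := hI.meas_biInter (S := s) (s := fun i => (E i)ᶜ) hmeas
      have hset : (⋂ i ∈ s, (E i)ᶜ) = ⋂ i, (A i)ᶜ := by
        ext ω
        simp [hs, hE]
        exact Iff.rfl
      rw [hset] at hprod
      rw [hprod, hs, Finset.prod_map]
      have : ∀ i : Fin a, μ (E ((⟨fun i => (Sum.inl i : Fin a ⊕ (Fin b ⊕ Fin b × Fin c)),
          fun x y hxy => by simpa using hxy⟩ : Fin a ↪ (Fin a ⊕ (Fin b ⊕ Fin b × Fin c))) i))ᶜ
          = ENNReal.ofReal (1 - pA) := fun i => hAc i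
      rw [Finset.prod_congr rfl (fun i _ => this i), Finset.prod_const, Finset.card_univ,
        Fintype.card_fin, ← ENNReal.ofReal_pow (by linarith)]
    have h1 : (⋂ i, (A i)ᶜ)ᶜ = ⋃ i, A i := by
      simp [Set.compl_iInter]
    have := prob_compl_eq_one_sub (μ := μ)
      (MeasurableSet.iInter fun i => (hmA i).compl)
    rw [h1, hcap] at this
    rw [this, ← ENNReal.ofReal_one, ← ENNReal.ofReal_sub _ (pow_nonneg (by linarith) a)]
  have hBindep : μ ((⋃ i, A i) ∩ (P n ∩ ⋃ j, P j ∩ ⋃ k, L j k))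
      = μ (⋃ i, A i) * μ (P n ∩ ⋃ j, P j ∩ ⋃ k, L j k) := by
    have hdisj : Disjoint (Set.range (Sum.inl : Fin a → Fin a ⊕ (Fin b ⊕ Fin b × Fin c)))
        (Set.range (Sum.inr : (Fin b ⊕ Fin b × Fin c) → Fin a ⊕ (Fin b ⊕ Fin b × Fin c))) :=
      Set.isCompl_range_inl_range_inr.disjoint
    have hInd := iIndepSet.indep_generateFrom_of_disjoint hmE hindep _ _ hdisj
    have h1 : MeasurableSet[generateFrom
        {t | ∃ m ∈ Set.range (Sum.inl : Fin a → Fin a ⊕ (Fin b ⊕ Fin b × Fin c)), E m = t}] (⋃ i, A i) :=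
      MeasurableSet.iUnion fun i => hgen _ (Sum.inl i) ⟨i, rfl⟩
    have h2 : MeasurableSet[generateFrom
        {t | ∃ m ∈ Set.range (Sum.inr : (Fin b ⊕ Fin b × Fin c) → Fin a ⊕ (Fin b ⊕ Fin b × Fin c)), E m = t}]
        (P n ∩ ⋃ j, P j ∩ ⋃ k, L j k) := by
      have hPm : ∀ j, MeasurableSet[generateFrom
          {t | ∃ m ∈ Set.range (Sum.inr : (Fin b ⊕ Fin b × Fin c) → Fin a ⊕ (Fin b ⊕ Fin b × Fin c)), E m = t}] (P j) :=
        fun j => hgen _ (Sum.inr (Sum.inl j)) ⟨Sum.inl j, rfl⟩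
      have hLm : ∀ j k, MeasurableSet[generateFrom
          {t | ∃ m ∈ Set.range (Sum.inr : (Fin b ⊕ Fin b × Fin c) → Fin a ⊕ (Fin b ⊕ Fin b × Fin c)), E m = t}] (L j k) :=
        fun j k => hgen _ (Sum.inr (Sum.inr (j, k))) ⟨Sum.inr (j, k), rfl⟩
      exact (hPm n).inter (MeasurableSet.iUnion fun j =>
        (hPm j).inter (MeasurableSet.iUnion fun k => hLm j k))
    exact (Indep_iff _ _ _).1 hInd _ _ h1 h2
  -- assemble
  rw [cond_apply (hmP n)]
  have hre : P n ∩ ((⋃ i, A i) ∩ ⋃ j, P j ∩ ⋃ k, L j k)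
      = (⋃ i, A i) ∩ (P n ∩ ⋃ j, P j ∩ ⋃ k, L j k) := by
    rw [Set.inter_left_comm]
  rw [hre, hBindep, hUA, hW, hP n]
  rw [ENNReal.toReal_mul, ENNReal.toReal_mul, ENNReal.toReal_inv,
    ENNReal.toReal_ofReal hpP0,
    ENNReal.toReal_ofReal (by
      have hApow : (1 - pA) ^ a ≤ 1 :=
        pow_le_one₀ (by linarith) (by linarith)
      linarith),
    ENNReal.toReal_ofReal (mul_nonneg hpP0 (by linarith [hw1]))]
  field_simp
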